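/- The constant-zero sequence is the unique non-synchronizing point of the even shift: a point x ∈ X_even contains no synchronizing word if and only if x_n = 0 for all n ∈ ℤ. -/
import Mathlib


/-- `w` occurs as a (contiguous) factor of the bi-infinite sequence `x`. -/
def IsFactor {A : Type*} (w : List A) (x : ℤ → A) : Prop :=
  ∃ k : ℤ, ∀ i : Fin w.length, x (k + (i : ℕ)) = w.get i

/-- The language of a shift space `X ⊆ A^ℤ`: all finite words occurring in elements of `X`. -/
def Lang {A : Type*} (X : Set (ℤ → A)) : Set (List A) :=
  {w | ∃ x ∈ X, IsFactor w x}

/-- The context of a word `w` relative to a language `L`: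
`E(w) = {(a,b) : a ++ w ++ b ∈ L}`. -/
def Ctx {A : Type*} (L : Set (List A)) (w : List A) : Set (List A × List A) :=
  {p | p.1 ++ w ++ p.2 ∈ L}

/-- `w` is a synchronizing word for the language `L`: whenever `u ++ w ∈ L` and
`w ++ v ∈ L`, also `u ++ w ++ v ∈ L`. -/
def SyncWord {A : Type*} (L : Set (List A)) (w : List A) : Prop :=
  ∀ u v : List A, u ++ w ∈ L → w ++ v ∈ L → u ++ w ++ v ∈ L

/-- The even shift: binary bi-infinite sequences avoiding all words `1 0^{2k+1} 1`. -/
def evenShift : Set (ℤ → Fin 2) :=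
  {x | ∀ k : ℕ, ¬ IsFactor ((1 : Fin 2) :: (List.replicate (2 * k + 1) 0 ++ [1])) x}

/-- Entry of a word, with default 0. -/
def ent (w : List (Fin 2)) (n : ℕ) : Fin 2 := w.getD n 0

lemma ent_eq (w : List (Fin 2)) (i : ℕ) (h : i < w.length) : ent w i = w[i] := by
  simp [ent, List.getD_eq_getElem?_getD, List.getElem?_eq_getElem h]

lemma forb_ent (k m : ℕ) (h : m < 2 * k + 3) :
    ent ((1 : Fin 2) :: (List.replicate (2 * k + 1) 0 ++ [1])) m =
      if m = 0 ∨ m = 2 * k + 2 then 1 else 0 := by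
  have h' : m < ((1 : Fin 2) :: (List.replicate (2 * k + 1) 0 ++ [1])).length := by
    simp; omega
  rw [ent_eq _ _ h']
  match m with
  | 0 => simp
  | (n+1) =>
    rw [List.getElem_cons_succ]
    by_cases hn : n < 2 * k + 1
    · have hb : n < (List.replicate (2 * k + 1) (0 : Fin 2)).length := by
        simpa using hn
      rw [List.getElem_append_left hb, List.getElem_replicate, if_neg (by omega)]
    · have hn2 : n = 2 * k + 1 := by omega
      subst hn2
      have hb : (List.replicate (2 * k + 1) (0 : Fin 2)).length ≤ 2 * k + 1 := by simp
      rw [List.getElem_append_right hb, if_pos (by omega)]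
      simp

lemma factor_iff_ent (w : List (Fin 2)) (x : ℤ → Fin 2) :
    IsFactor w x ↔ ∃ k : ℤ, ∀ n : ℕ, n < w.length → x (k + n) = ent w n := by
  constructor
  · rintro ⟨k, h⟩
    exact ⟨k, fun n hn => by simpa [ent_eq w n hn] using h ⟨n, hn⟩⟩
  · rintro ⟨k, h⟩
    exact ⟨k, fun i => by simpa [ent_eq w i i.isLt] using h i i.isLt⟩

/-- Admissibility: no factor `1 0^{2k+1} 1` inside the word. -/
def Adm (w : List (Fin 2)) : Prop :=
  ∀ i j : ℕ, i < j → j < w.length → ent w i = 1 → ent w j = 1 →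
    (∀ m, i < m → m < j → ent w m = 0) → ¬ Even (j - i)

lemma factor_to_adm {w : List (Fin 2)} {x : ℤ → Fin 2} (hx : x ∈ evenShift)
    (hf : IsFactor w x) : Adm w := by
  rw [factor_iff_ent] at hf
  obtain ⟨k0, hk0⟩ := hf
  intro i j hij hj h1 h2 hmid heven
  obtain ⟨r, hr⟩ := heven
  have hr2 : ∃ k' : ℕ, j = i + (2 * k' + 2) := ⟨r - 1, by omega⟩
  obtain ⟨k', hk'⟩ := hr2
  apply hx k'
  rw [factor_iff_ent]
  refine ⟨k0 + i, fun n hn => ?_⟩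
  have hlen : ((1 : Fin 2) :: (List.replicate (2 * k' + 1) 0 ++ [1])).length = 2 * k' + 3 := by
    simp
  rw [hlen] at hn
  rw [forb_ent k' n hn]
  have hx1 : k0 + (i : ℤ) + n = k0 + ((i + n : ℕ) : ℤ) := by push_cast; ring
  rw [hx1, hk0 (i + n) (by omega)]
  rcases eq_or_ne n 0 with h0 | h0
  · subst h0; simpa using h1
  · rcases eq_or_ne n (2 * k' + 2) with h3 | h3
    · rw [if_pos (Or.inr h3)]; subst h3
      rw [← hk']; exact h2
    · rw [if_neg (by tauto)]
      exact hmid (i + n) (by omega) (by omega)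

lemma lang_to_adm {w : List (Fin 2)} (h : w ∈ Lang evenShift) : Adm w := by
  obtain ⟨y, hy, hf⟩ := h
  exact factor_to_adm hy hf

lemma adm_to_lang {w : List (Fin 2)} (ha : Adm w) : w ∈ Lang evenShift := by
  set x : ℤ → Fin 2 := fun n => if h : 0 ≤ n ∧ n < (w.length : ℤ) then ent w n.toNat else 0
    with hxdef
  have hval : ∀ n : ℤ, 0 ≤ n → n < (w.length : ℤ) → x n = ent w n.toNat := by
    intro n h1 h2; simp only [hxdef]; rw [dif_pos ⟨h1, h2⟩]
  have hone : ∀ n : ℤ, x n = 1 → 0 ≤ n ∧ n < (w.length : ℤ) := by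
    intro n hn
    by_contra hc
    simp only [hxdef] at hn
    rw [dif_neg hc] at hn
    exact absurd hn (by decide)
  refine ⟨x, ?_, ?_⟩
  · intro k hk
    rw [factor_iff_ent] at hk
    obtain ⟨p, hp⟩ := hk
    have hlen : ((1 : Fin 2) :: (List.replicate (2 * k + 1) 0 ++ [1])).length = 2 * k + 3 := by
      simp
    rw [hlen] at hp
    have e0 : x p = 1 := by
      have := hp 0 (by omega); rw [forb_ent k 0 (by omega)] at this; simpa using this
    have e1 : x (p + (2 * k + 2 : ℕ)) = 1 := by
      have := hp (2 * k + 2) (by omega)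
      rw [forb_ent k (2 * k + 2) (by omega)] at this
      simpa using this
    obtain ⟨hp0, hp1⟩ := hone p e0
    obtain ⟨hq0, hq1⟩ := hone _ e1
    set i := p.toNat with hi
    have hpi : (p : ℤ) = (i : ℤ) := by omega
    have hj : (p + (2 * k + 2 : ℕ)).toNat = i + (2 * k + 2) := by omega
    refine ha i (i + (2 * k + 2)) (by omega) (by omega) ?_ ?_ ?_ ?_
    · rw [← hval p hp0 hp1]; exact e0
    · rw [← hj, ← hval _ hq0 hq1]; exact e1
    · intro m hm1 hm2
      have hmx : x (p + ((m - i : ℕ) : ℤ)) = 0 := by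
        have := hp (m - i) (by omega)
        rw [forb_ent k (m - i) (by omega), if_neg (by omega)] at this
        exact this
      have hcast : p + ((m - i : ℕ) : ℤ) = (m : ℤ) := by omega
      rw [hcast, hval (m : ℤ) (by omega) (by omega)] at hmx
      simpa using hmx
    · exact ⟨k + 1, by omega⟩
  · rw [factor_iff_ent]
    refine ⟨0, fun n hn => ?_⟩
    rw [zero_add, hval (n : ℤ) (by omega) (by omega)]
    simp

lemma ent_append_left (u v : List (Fin 2)) (m : ℕ) (h : m < u.length) :
    ent (u ++ v) m = ent u m := by
  rw [ent_eq _ _ (by simp; omega), ent_eq _ _ h, List.getElem_append_left h]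

lemma ent_append_right (u v : List (Fin 2)) (m : ℕ) (h : u.length ≤ m)
    (h2 : m < u.length + v.length) :
    ent (u ++ v) m = ent v (m - u.length) := by
  rw [ent_eq _ _ (by simp; omega), ent_eq _ _ (by omega), List.getElem_append_right h]

lemma adm_glue {u v : List (Fin 2)} (hu : Adm (u ++ [1])) (hv : Adm (1 :: v)) :
    Adm (u ++ 1 :: v) := by
  set p := u.length with hp
  have hW : u ++ 1 :: v = (u ++ [1]) ++ v := by simp
  have hlen : (u ++ 1 :: v).length = p + 1 + v.length := by simp; omega
  have hleft : ∀ m, m ≤ p → ent (u ++ 1 :: v) m = ent (u ++ [1]) m := by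
    intro m hm
    rw [hW, ent_append_left _ _ _ (by simp; omega)]
  have hright : ∀ m, p ≤ m → m < p + 1 + v.length →
      ent (u ++ 1 :: v) m = ent (1 :: v) (m - p) := by
    intro m hm hm2
    rw [ent_append_right _ _ _ (by omega) (by simp; omega)]
  have hmidone : ent (u ++ 1 :: v) p = 1 := by
    rw [hright p le_rfl (by omega)]
    simp [ent]
  intro i j hij hj h1 h2 hmid heven
  rw [hlen] at hj
  rcases le_or_gt j p with hjp | hjp
  · refine hu i j hij (by simp; omega) ?_ ?_ ?_ heven
    · rw [← hleft i (by omega)]; exact h1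
    · rw [← hleft j hjp]; exact h2
    · intro m hm1 hm2
      rw [← hleft m (by omega)]; exact hmid m hm1 hm2
  · rcases le_or_gt p i with hpi | hpi
    · have := hv (i - p) (j - p) (by omega) (by simp; omega) ?_ ?_ ?_
      · exact this (by obtain ⟨r, hr⟩ := heven; exact ⟨r, by omega⟩)
      · rw [← hright i hpi (by omega)]; exact h1
      · rw [← hright j (by omega) (by omega)]; exact h2
      · intro m hm1 hm2
        rw [show m = (m + p) - p by omega, ← hright (m + p) (by omega) (by omega)]
        exact hmid (m + p) (by omega) (by omega)
    · have := hmid p hpi hjp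
      rw [hmidone] at this
      exact absurd this (by decide)

lemma sync_one : SyncWord (Lang evenShift) [1] := by
  intro u v hu hv
  have h1 : Adm (u ++ [1]) := lang_to_adm hu
  have h2 : Adm (1 :: v) := by
    have := lang_to_adm hv
    simpa using this
  have h3 := adm_glue h1 h2
  have h4 := adm_to_lang h3
  have he : u ++ [1] ++ v = u ++ 1 :: v := by simp
  rw [he]
  exact h4

lemma zero_not_sync (w : List (Fin 2)) (hw : ∀ n, n < w.length → ent w n = 0) :
    ¬ SyncWord (Lang evenShift) w := by
  intro hs
  set u0 : List (Fin 2) := if Even w.length then [0] else [] with hu0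
  have hu0e : ∀ n, n < u0.length → ent u0 n = 0 := by
    intro n hn
    rw [hu0] at hn ⊢
    split at hn <;> rename_i he
    · simp at hn
      simp [hn]
      rw [if_pos he]
      simp [ent]
    · simp at hn
  have hlu0 : u0.length = if Even w.length then 1 else 0 := by
    rw [hu0]; split <;> simp
  have hpar : Even (1 + u0.length + w.length) := by
    rw [hlu0, Nat.even_iff]
    rcases Nat.even_or_odd w.length with he | he
    · rw [if_pos he]; rw [Nat.even_iff] at he; omega
    · rw [if_neg (Nat.not_even_iff_odd.mpr he)]; rw [Nat.odd_iff] at he; omega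
  -- every entry of `1 :: (u0 ++ w)` other than the head is 0
  have htail : ∀ m, 1 ≤ m → m < 1 + u0.length + w.length →
      ent (1 :: (u0 ++ w)) m = 0 := by
    intro m hm1 hm2
    obtain ⟨n, rfl⟩ : ∃ n, m = n + 1 := ⟨m - 1, by omega⟩
    rw [show ent ((1 : Fin 2) :: (u0 ++ w)) (n + 1) = ent (u0 ++ w) n from
      List.getD_cons_succ ..]
    rcases lt_or_ge n u0.length with hn | hn
    · rw [ent_append_left _ _ _ hn]; exact hu0e n hn
    · rw [ent_append_right _ _ _ hn (by omega)]
      exact hw _ (by omega)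
  -- (1 :: u0) ++ w ∈ Lang
  have hA : (1 :: u0) ++ w ∈ Lang evenShift := by
    apply adm_to_lang
    intro i j hij hj h1 h2 hmid heven
    have hj' : j < 1 + u0.length + w.length := by simp at hj; omega
    have : ent ((1 : Fin 2) :: (u0 ++ w)) j = 0 := htail j (by omega) hj'
    rw [show ((1 : Fin 2) :: u0) ++ w = 1 :: (u0 ++ w) by simp] at h2
    rw [h2] at this
    exact absurd this (by decide)
  -- w ++ [1] ∈ Lang
  have hB : w ++ [1] ∈ Lang evenShift := by
    apply adm_to_lang
    intro i j hij hj h1 h2 hmid heven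
    have hj' : j < w.length + 1 := by simpa using hj
    have hi' : i < w.length := by omega
    rw [ent_append_left _ _ _ hi', hw i hi'] at h1
    exact absurd h1 (by decide)
  -- apply synchronization
  have hC := hs (1 :: u0) [1] hA hB
  have hadm := lang_to_adm hC
  have heq : (1 :: u0) ++ w ++ [1] = (1 :: (u0 ++ w)) ++ [1] := by simp
  rw [heq] at hadm
  set B := ((1 : Fin 2) :: (u0 ++ w)) ++ [1] with hB'
  have hlenB : B.length = 1 + u0.length + w.length + 1 := by simp [hB']; omega
  set j := 1 + u0.length + w.length with hjdef
  have hlenC : ((1 : Fin 2) :: (u0 ++ w)).length = j := by simp; omega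
  refine hadm 0 j (by omega) (by omega) ?_ ?_ ?_ ?_
  · rw [hB', ent_append_left _ _ _ (by omega)]
    exact List.getD_cons_zero
  · rw [hB', ent_append_right _ _ _ (by omega) (by simp; omega)]
    simp [hlenC, ent]
  · intro m hm1 hm2
    rw [hB', ent_append_left _ _ _ (by omega)]
    exact htail m hm1 hm2
  · simpa using hpar

/-- The constant-zero sequence is the unique non-synchronizing point of the even shift. -/
theorem even_shift_nonsync_iff (x : ℤ → Fin 2) (hx : x ∈ evenShift) :
    (∀ w : List (Fin 2), IsFactor w x → ¬ SyncWord (Lang evenShift) w) ↔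
      ∀ n : ℤ, x n = 0 := by
  constructor
  · intro h n
    by_contra hn
    have h1 : x n = 1 := by
      generalize hxn : x n = a at hn
      fin_cases a <;> simp_all
    refine h [1] ?_ sync_one
    rw [factor_iff_ent]
    refine ⟨n, fun m hm => ?_⟩
    simp at hm
    subst hm
    simpa [ent] using h1
  · intro h0 w hw
    apply zero_not_sync
    rw [factor_iff_ent] at hw
    obtain ⟨k, hk⟩ := hw
    intro n hn
    rw [← hk n hn, h0]
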